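/- Let (R, m) be a Noetherian local ring, I an m-primary ideal generated by a regular sequence f₁, …, f_d with d ≥ 2. Write I^{[l]} = (f₁^l, …, f_d^l). Then for all integers l ≥ 1 and n ≥ 1, the colon ideal I^{[l]} : I^n equals I^{dl−n−d+1} + I^{[l]} (with the convention I^k = R for k ≤ 0). -/

import Mathlib

open Ideal
namespace Stmt5Aux
variable {d : ℕ} {A : Type*} [CommRing A]
def mon (g : Fin d → A) (b : Fin d → ℕ) : A := ∏ t, g t ^ b t
def JB (g : Fin d → A) (B : Finset (Fin d → ℕ)) : Ideal A := Ideal.span (mon g '' ↑B)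

lemma mon_zero (g : Fin d → A) : mon g 0 = 1 := by simp [mon]
lemma mon_add (g : Fin d → A) (b c : Fin d → ℕ) : mon g (b + c) = mon g b * mon g c := by
  simp [mon, pow_add, Finset.prod_mul_distrib]
lemma mon_single (g : Fin d → A) (t : Fin d) (k : ℕ) : mon g (Pi.single t k) = g t ^ k := by
  unfold mon
  rw [Finset.prod_eq_single t]
  · simp
  · intro s _ hs; simp [Pi.single_eq_of_ne hs]
  · simp

lemma mon_mem_JB {g : Fin d → A} {B : Finset (Fin d → ℕ)} {b : Fin d → ℕ} (hb : b ∈ B) :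
    mon g b ∈ JB g B := Ideal.subset_span ⟨b, by simpa using hb, rfl⟩

lemma JB_mono {g : Fin d → A} {B B' : Finset (Fin d → ℕ)} (h : B ⊆ B') : JB g B ≤ JB g B' :=
  Ideal.span_mono (Set.image_mono (by exact_mod_cast h))

lemma JB_union (g : Fin d → A) (B C : Finset (Fin d → ℕ)) [DecidableEq (Fin d → ℕ)] :
    JB g (B ∪ C) = JB g B ⊔ JB g C := by
  unfold JB
  rw [← Ideal.span_union, ← Set.image_union, Finset.coe_union]

lemma JB_le_of_dvd {g : Fin d → A} {B B' : Finset (Fin d → ℕ)}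
    (h : ∀ b ∈ B, ∃ b' ∈ B', ∃ u, mon g b = u * mon g b') : JB g B ≤ JB g B' := by
  rw [JB, Ideal.span_le]
  rintro x ⟨b, hb, rfl⟩
  obtain ⟨b', hb', u, hu⟩ := h b (by simpa using hb)
  rw [hu]
  exact Ideal.mul_mem_left _ _ (mon_mem_JB hb')

lemma JB_singleton (g : Fin d → A) (b : Fin d → ℕ) : JB g {b} = Ideal.span {mon g b} := by
  simp [JB]

lemma JB_map {A' : Type*} [CommRing A'] (phi : A →+* A') (g : Fin d → A)
    (Bs : Finset (Fin d → ℕ)) :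
    Ideal.map phi (JB g Bs) = JB (fun t => phi (g t)) Bs := by
  unfold JB
  rw [Ideal.map_span, ← Set.image_comp]
  congr 1
  apply Set.image_congr
  intro b _
  simp [mon, Function.comp]

noncomputable def esupp (c : Fin d → ℕ) : Finset (Fin d) := Finset.univ.filter fun t => c t ≠ 0
noncomputable def pureB (c : Fin d → ℕ) : Finset (Fin d → ℕ) :=
  (esupp c).image fun t => Pi.single t (c t)
noncomputable def P (g : Fin d → A) (c : Fin d → ℕ) : Ideal A := JB g (pureB c)

lemma mem_esupp {c : Fin d → ℕ} {t : Fin d} : t ∈ esupp c ↔ c t ≠ 0 := by simp [esupp]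

lemma pureB_split {c : Fin d → ℕ} {i : Fin d} (hi : c i ≠ 0) :
    pureB c = pureB (Function.update c i 0) ∪ {Pi.single i (c i)} := by
  classical
  ext b
  simp only [pureB, Finset.mem_union, Finset.mem_image, Finset.mem_singleton, mem_esupp]
  constructor
  · rintro ⟨t, ht, rfl⟩
    by_cases hti : t = i
    · subst hti; right; rfl
    · left; exact ⟨t, by simp [Function.update, hti, ht], by simp [Function.update, hti]⟩
  · rintro (⟨t, ht, rfl⟩ | rfl)
    · by_cases hti : t = i
      · subst hti; simp [Function.update] at ht
      · exact ⟨t, by simpa [Function.update, hti] using ht,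
          by simp [Function.update, hti]⟩
    · exact ⟨i, hi, rfl⟩

lemma P_split {g : Fin d → A} {c : Fin d → ℕ} {i : Fin d} (hi : c i ≠ 0) :
    P g c = P g (Function.update c i 0) ⊔ Ideal.span {g i ^ c i} := by
  classical
  rw [P, pureB_split hi, JB_union, JB_singleton, mon_single]; rfl

lemma P_supp_mono {g : Fin d → A} (c : Fin d → ℕ) (i : Fin d) :
    P g (Function.update c i 0) ≤ P g c := by
  apply JB_mono
  intro b hb
  simp only [pureB, Finset.mem_image, mem_esupp] at hb ⊢
  obtain ⟨t, ht, rfl⟩ := hb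
  by_cases hti : t = i
  · subst hti; simp [Function.update] at ht
  · refine ⟨t, ?_, by simp [Function.update, hti]⟩
    simpa [Function.update, hti] using ht

/-- "weak regularity in all orders" hypothesis, purely ideal-theoretic. -/
def HWI (g : Fin d → A) (S : Finset (Fin d)) : Prop :=
  ∀ i ∈ S, ∀ T : Finset (Fin d), T ⊆ S → i ∉ T →
    ∀ z : A, z * g i ∈ Ideal.span (g '' ↑T) → z ∈ Ideal.span (g '' ↑T)

/-- regularity modulo ideals of pure powers. -/
def HP (g : Fin d → A) (S : Finset (Fin d)) : Prop :=
  ∀ i ∈ S, ∀ c : Fin d → ℕ, (∀ t, c t ≠ 0 → t ∈ S ∧ t ≠ i) →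
    ∀ z : A, z * g i ∈ P g c → z ∈ P g c

lemma powcol {Q : Ideal A} {a : A} (h : ∀ z, z * a ∈ Q → z ∈ Q) :
    ∀ (s : ℕ) (z : A), z * a ^ s ∈ Q → z ∈ Q := by
  intro s
  induction s with
  | zero => simpa using fun z h => h
  | succ s ih =>
    intro z hz
    rw [pow_succ, ← mul_assoc] at hz
    exact ih z (h _ hz)


lemma esupp_update_zero (c : Fin d → ℕ) (j : Fin d) :
    esupp (Function.update c j 0) = (esupp c).erase j := by
  ext t
  by_cases htj : t = j <;> simp [mem_esupp, Finset.mem_erase, htj, Function.update, *]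

lemma P_eq_span_of_le_one {g : Fin d → A} {c : Fin d → ℕ} (h : ∀ t, c t ≤ 1) :
    P g c = Ideal.span (g '' ↑(esupp c)) := by
  unfold P JB pureB
  congr 1
  rw [Finset.coe_image, Set.image_image]
  apply Set.image_congr
  intro t ht
  rw [Finset.mem_coe, mem_esupp] at ht
  have h1 := h t
  have : c t = 1 := by omega
  rw [mon_single, this, pow_one]

lemma HP_of_HWI {g : Fin d → A} {S : Finset (Fin d)} (hw : HWI g S) : HP g S := by
  classical
  suffices H : ∀ (p q : ℕ) (c : Fin d → ℕ) (i : Fin d), i ∈ S →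
      (∀ t, c t ≠ 0 → t ∈ S ∧ t ≠ i) → (esupp c).card ≤ p → (∑ t, c t) ≤ q →
      ∀ z : A, z * g i ∈ P g c → z ∈ P g c by
    intro i hi c hc z hz
    exact H (esupp c).card (∑ t, c t) c i hi hc le_rfl le_rfl z hz
  have base : ∀ (c : Fin d → ℕ) (i : Fin d), i ∈ S →
      (∀ t, c t ≠ 0 → t ∈ S ∧ t ≠ i) → (∀ t, c t ≤ 1) →
      ∀ z : A, z * g i ∈ P g c → z ∈ P g c := by
    intro c i hi hc hone z hz
    rw [P_eq_span_of_le_one hone] at hz ⊢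
    refine hw i hi (esupp c) ?_ ?_ z hz
    · intro t ht; exact (hc t (mem_esupp.mp ht)).1
    · intro ht; exact (hc i (mem_esupp.mp ht)).2 rfl
  intro p
  induction p with
  | zero =>
    intro q c i hi hc hcard _ z hz
    refine base c i hi hc (fun t => ?_) z hz
    rw [Nat.le_zero, Finset.card_eq_zero] at hcard
    have : t ∉ esupp c := by rw [hcard]; exact Finset.notMem_empty t
    rw [mem_esupp, not_not] at this
    omega
  | succ p ihp =>
    intro q
    induction q with
    | zero =>
      intro c i hi hc _ hsum z hz
      refine base c i hi hc (fun t => ?_) z hz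
      rw [Nat.le_zero, Finset.sum_eq_zero_iff] at hsum
      rw [hsum t (Finset.mem_univ t)]; omega
    | succ q ihq =>
      intro c i hi hc hcard hsum z hz
      by_cases hone : ∀ t, c t ≤ 1
      · exact base c i hi hc hone z hz
      push_neg at hone
      obtain ⟨j, hj⟩ := hone
      have hj2 : 2 ≤ c j := hj
      obtain ⟨hjS, hji⟩ := hc j (by omega)
      set c' := Function.update c j 0 with hc'def
      set Q := P g c' with hQdef
      have hQle : Q ≤ P g c := P_supp_mono c j
      have hupdate_eq : ∀ v : ℕ, Function.update (Function.update c j v) j 0 = c' := by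
        intro v; rw [hc'def]; exact Function.update_idem ..
      have hsupp_update : ∀ v : ℕ, v ≠ 0 → esupp (Function.update c j v) = esupp c := by
        intro v hv; ext t
        by_cases htj : t = j
        · subst htj; simp [mem_esupp, Function.update, hv]; omega
        · simp [mem_esupp, Function.update, htj]
      have hc_update : ∀ v : ℕ, ∀ t, Function.update c j v t ≠ 0 → t ∈ S ∧ t ≠ i := by
        intro v t ht
        by_cases htj : t = j
        · subst htj; exact ⟨hjS, hji⟩
        · rw [Function.update_of_ne htj] at ht; exact hc t ht
      have hsum_update : ∀ v : ℕ, (∑ t, Function.update c j v t) + c j = (∑ t, c t) + v := by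
        intro v
        rw [Finset.sum_update_of_mem (Finset.mem_univ j),
          ← Finset.add_sum_erase _ c (Finset.mem_univ j),
          Finset.sdiff_singleton_eq_erase]
        ring
      -- the split identities
      have splitc : P g c = Q ⊔ Ideal.span {g j ^ c j} := P_split (by omega)
      have splitcm : P g (Function.update c j (c j - 1)) =
          Q ⊔ Ideal.span {g j ^ (c j - 1)} := by
        rw [P_split (i := j) (by simp [Function.update]; omega), hupdate_eq,
          Function.update_self]
      have splitc1 : P g (Function.update c j 1) = Q ⊔ Ideal.span {g j} := by
        rw [P_split (i := j) (by simp [Function.update]), hupdate_eq,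
          Function.update_self, pow_one]
      -- P g c ≤ P g cm
      have h1 : P g c ≤ P g (Function.update c j (c j - 1)) := by
        apply JB_le_of_dvd
        intro b hb
        simp only [pureB, Finset.mem_image, mem_esupp] at hb
        obtain ⟨t, ht, rfl⟩ := hb
        by_cases htj : t = j
        · subst htj
          refine ⟨Pi.single t (c t - 1), ?_, g t, ?_⟩
          · simp only [pureB, Finset.mem_image, mem_esupp]
            exact ⟨t, by simp [Function.update]; omega, by simp [Function.update]⟩
          · rw [mon_single, mon_single]
            rw [← pow_succ']
            congr 1; omega
        · refine ⟨Pi.single t (c t), ?_, 1, by rw [one_mul]⟩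
          simp only [pureB, Finset.mem_image, mem_esupp]
          exact ⟨t, by simp [Function.update, htj, ht], by simp [Function.update, htj]⟩
      -- step 1
      have step1 : z ∈ Q ⊔ Ideal.span {g j ^ (c j - 1)} := by
        rw [← splitcm]
        refine ihq (Function.update c j (c j - 1)) i hi (hc_update _) ?_ ?_ z (h1 hz)
        · rw [hsupp_update _ (by omega)]; exact hcard
        · have := hsum_update (c j - 1); omega
      obtain ⟨y, hy, wz, hwz, hzeq⟩ := Submodule.mem_sup.mp step1
      obtain ⟨u, hu⟩ := Ideal.mem_span_singleton'.mp hwz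
      -- step 2
      have step2 : u * g j ^ (c j - 1) * g i ∈ Q ⊔ Ideal.span {g j ^ c j} := by
        rw [← splitc]
        have : u * g j ^ (c j - 1) * g i = z * g i - y * g i := by
          rw [← hzeq, ← hu]; ring
        rw [this]
        exact sub_mem hz (Ideal.mul_mem_right _ _ (hQle hy))
      obtain ⟨α, hα, wβ, hwβ, hαβ⟩ := Submodule.mem_sup.mp step2
      obtain ⟨β, hβ⟩ := Ideal.mem_span_singleton'.mp hwβ
      have hpow : g j ^ (c j - 1) * g j = g j ^ c j := by
        rw [← pow_succ]; congr 1; omega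
      -- step 3 : colon property for g j modulo Q
      have hcolQ : ∀ z' : A, z' * g j ∈ Q → z' ∈ Q := by
        intro z' hz'
        refine ihp (∑ t, c' t) c' j hjS ?_ ?_ le_rfl z' hz'
        · intro t ht
          by_cases htj : t = j
          · subst htj; simp [hc'def, Function.update] at ht
          · rw [hc'def, Function.update_of_ne htj] at ht
            exact ⟨(hc t ht).1, htj⟩
        · have hjsupp : j ∈ esupp c := mem_esupp.mpr (by omega)
          rw [hc'def, esupp_update_zero]
          have := Finset.card_erase_of_mem hjsupp
          omega
      have step3 : u * g i - β * g j ∈ Q := by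
        refine powcol hcolQ (c j - 1) _ ?_
        have : (u * g i - β * g j) * g j ^ (c j - 1) = α := by
          have expand : (u * g i - β * g j) * g j ^ (c j - 1) =
              u * g j ^ (c j - 1) * g i - β * (g j ^ (c j - 1) * g j) := by ring
          rw [expand, hpow]
          have : β * g j ^ c j = u * g j ^ (c j - 1) * g i - α := by
            rw [← hβ] at hαβ; rw [← hαβ]; ring
          rw [this]; ring
        rw [this]; exact hα
      -- step 4
      have step4 : u ∈ Q ⊔ Ideal.span {g j} := by
        rw [← splitc1]
        refine ihq (Function.update c j 1) i hi (hc_update _) ?_ ?_ u ?_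
        · rw [hsupp_update _ one_ne_zero]; exact hcard
        · have := hsum_update 1; omega
        · rw [splitc1]
          have : u * g i = (u * g i - β * g j) + β * g j := by ring
          rw [this]
          exact Submodule.add_mem _ (Submodule.mem_sup_left step3)
            (Submodule.mem_sup_right (Ideal.mem_span_singleton'.mpr ⟨β, rfl⟩))
      obtain ⟨α', hα', w', hw', hueq⟩ := Submodule.mem_sup.mp step4
      obtain ⟨u'', hu''⟩ := Ideal.mem_span_singleton'.mp hw'
      -- step 5 : assemble
      have hz5 : z = y + α' * g j ^ (c j - 1) + u'' * g j ^ c j := by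
        rw [← hzeq, ← hu, ← hueq, ← hu'', ← hpow]; ring
      rw [hz5]
      refine Submodule.add_mem _ (Submodule.add_mem _ (hQle hy)
        (Ideal.mul_mem_right _ _ (hQle hα'))) ?_
      rw [splitc]
      exact Submodule.mem_sup_right (Ideal.mul_mem_left _ _ (Ideal.mem_span_singleton_self _))

lemma pureB_zero : pureB (0 : Fin d → ℕ) = ∅ := by
  simp [pureB, esupp]

lemma P_zero (g : Fin d → A) : P g 0 = ⊥ := by
  rw [P, pureB_zero]; simp [JB]

lemma mon_eq_mul {g : Fin d → A} {b : Fin d → ℕ} {j : Fin d} (hj : b j ≠ 0) :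
    mon g b = g j * mon g (Function.update b j (b j - 1)) := by
  have hb : b = Function.update b j (b j - 1) + Pi.single j 1 := by
    funext t
    by_cases htj : t = j
    · subst htj; simp [Function.update]; omega
    · simp [Function.update, htj, Pi.single_eq_of_ne htj]
  conv_lhs => rw [hb]
  rw [mon_add, mon_single, pow_one]
  ring

/-- `HP` descends to quotients by a pure power. -/
lemma HP_quotient {g : Fin d → A} {S : Finset (Fin d)} (hp : HP g S) {j : Fin d}
    (hj : j ∈ S) {s : ℕ} (hs : s ≠ 0) :
    HP (fun t => Ideal.Quotient.mk (Ideal.span {g j ^ s}) (g t)) (S.erase j) := by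
  classical
  intro i hi c hc zb hzb
  obtain ⟨z, rfl⟩ := Ideal.Quotient.mk_surjective zb
  have hmap : ∀ c' : Fin d → ℕ,
      P (fun t => Ideal.Quotient.mk (Ideal.span {g j ^ s}) (g t)) c' =
        Ideal.map (Ideal.Quotient.mk (Ideal.span {g j ^ s})) (P g c') := by
    intro c'
    rw [P, P, JB_map]
  have hcj : c j = 0 := by
    by_contra h
    exact (Finset.mem_erase.mp (hc j h).1).1 rfl
  have hij : i ≠ j := (Finset.mem_erase.mp hi).1
  have hiS : i ∈ S := (Finset.mem_erase.mp hi).2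
  have hsplit : P g (Function.update c j s) = P g c ⊔ Ideal.span {g j ^ s} := by
    rw [P_split (i := j) (by simp [Function.update, hs]), Function.update_idem,
      Function.update_self]
    congr 1
    rw [Function.update_eq_self_iff.mpr hcj.symm]
  have hzb' : Ideal.Quotient.mk (Ideal.span {g j ^ s}) (z * g i) ∈
      Ideal.map (Ideal.Quotient.mk (Ideal.span {g j ^ s})) (P g c) := by
    rw [RingHom.map_mul, ← hmap]; exact hzb
  have hz : z * g i ∈ P g (Function.update c j s) := by
    rw [hsplit]
    exact Ideal.mem_quotient_iff_mem_sup.mp hzb'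
  have hz2 : z ∈ P g (Function.update c j s) := by
    refine hp i hiS (Function.update c j s) ?_ z hz
    intro t ht
    by_cases htj : t = j
    · subst htj; exact ⟨hj, fun h => hij h.symm⟩
    · rw [Function.update_of_ne htj] at ht
      obtain ⟨h1, h2⟩ := hc t ht
      exact ⟨Finset.mem_of_mem_erase h1, h2⟩
  rw [hmap]
  exact Ideal.mem_quotient_iff_mem_sup.mpr (by rwa [← hsplit])

/-- total degree of a finite set of exponent vectors -/
noncomputable def degB (B : Finset (Fin d → ℕ)) : ℕ := ∑ b ∈ B, ∑ t, b t

lemma JB_top {g : Fin d → A} {B : Finset (Fin d → ℕ)} (h : (0 : Fin d → ℕ) ∈ B) :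
    JB g B = ⊤ := by
  rw [Ideal.eq_top_iff_one]
  simpa [mon_zero] using mon_mem_JB (g := g) h

universe u

/-- The key lemma: modulo any monomial ideal in the "regular system" `g` avoiding
the variable `i`, the element `g i` is a nonzerodivisor. -/
lemma Mgen : ∀ (p q : ℕ) {A' : Type u} [CommRing A'] (g : Fin d → A')
    (S : Finset (Fin d)), HP g S → S.card ≤ p → ∀ i ∈ S, ∀ B : Finset (Fin d → ℕ),
    degB B ≤ q → (∀ b ∈ B, ∀ t, b t ≠ 0 → t ∈ S ∧ t ≠ i) →
    ∀ x : A', x * g i ∈ JB g B → x ∈ JB g B := by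
  intro p
  induction p with
  | zero =>
    intro q A' _ g S hp hS i hi B _ _ x _
    rw [Nat.le_zero, Finset.card_eq_zero] at hS
    exact absurd (hS ▸ hi) (Finset.notMem_empty i)
  | succ p ihp =>
    intro q
    induction q with
    | zero =>
      intro A' _ g S hp hS i hi B hdeg hsupp x hx
      by_cases h0 : (0 : Fin d → ℕ) ∈ B
      · rw [JB_top h0]; trivial
      have hBe : B = ∅ := by
        by_contra hne
        obtain ⟨b, hb⟩ := Finset.nonempty_iff_ne_empty.mpr hne
        refine h0 ?_
        have hb0 : b = 0 := by
          funext t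
          have h1 : ∑ b ∈ B, ∑ t, b t = 0 := Nat.le_zero.mp hdeg
          rw [Finset.sum_eq_zero_iff] at h1
          have h2 := (Finset.sum_eq_zero_iff.mp (h1 b hb)) t (Finset.mem_univ t)
          exact h2
        rwa [← hb0]
      subst hBe
      have hbot : JB g (∅ : Finset (Fin d → ℕ)) = ⊥ := by simp [JB]
      have hx0 : x * g i ∈ P g 0 := by rw [P_zero, ← hbot]; exact hx
      have := hp i hi 0 (by simp) x hx0
      rwa [P_zero, ← hbot] at this
    | succ q ihq =>
      intro A' _ g S hp hS i hi B hdeg hsupp x hx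
      classical
      by_cases h0 : (0 : Fin d → ℕ) ∈ B
      · rw [JB_top h0]; trivial
      by_cases hBe : B = ∅
      · subst hBe
        have hbot : JB g (∅ : Finset (Fin d → ℕ)) = ⊥ := by simp [JB]
        have hx0 : x * g i ∈ P g 0 := by rw [P_zero, ← hbot]; exact hx
        have := hp i hi 0 (by simp) x hx0
        rwa [P_zero, ← hbot] at this
      obtain ⟨b0, hb0B⟩ := Finset.nonempty_iff_ne_empty.mpr hBe
      have hb0ne : b0 ≠ 0 := fun h => h0 (h ▸ hb0B)
      obtain ⟨j, hj0⟩ := Function.ne_iff.mp hb0ne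
      rw [Pi.zero_apply] at hj0
      obtain ⟨hjS, hji⟩ := hsupp b0 hb0B j hj0
      set B' := B.filter (fun b => b j = 0) with hB'def
      set B'' := B.filter (fun b => ¬ b j = 0) with hB''def
      have hB'le : JB g B' ≤ JB g B := JB_mono (Finset.filter_subset _ _)
      have hb0B'' : b0 ∈ B'' := Finset.mem_filter.mpr ⟨hb0B, hj0⟩
      have hdegsplit : degB B' + degB B'' = degB B := by
        rw [degB, degB, degB]
        exact Finset.sum_filter_add_sum_filter_not B _ _
      have hF1 : ∀ b ∈ B'', 1 ≤ ∑ t, b t := by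
        intro b hb
        have := (Finset.mem_filter.mp hb).2
        calc 1 ≤ b j := by omega
        _ ≤ ∑ t, b t := Finset.single_le_sum (fun _ _ => Nat.zero_le _) (Finset.mem_univ j)
      have hdegB''pos : 1 ≤ degB B'' := le_trans (hF1 b0 hb0B'')
        (Finset.single_le_sum (fun _ _ => Nat.zero_le _) hb0B'')
      set K := B''.image (fun b => Function.update b j (b j - 1)) with hKdef
      have hKmem : ∀ k ∈ K, ∃ b ∈ B'', k = Function.update b j (b j - 1) := by
        intro k hk
        obtain ⟨b, hb, rfl⟩ := Finset.mem_image.mp hk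
        exact ⟨b, hb, rfl⟩
      have hFupd : ∀ b : Fin d → ℕ, b j ≠ 0 →
          (∑ t, Function.update b j (b j - 1) t) + 1 = ∑ t, b t := by
        intro b hb
        rw [Finset.sum_update_of_mem (Finset.mem_univ j),
          ← Finset.add_sum_erase _ b (Finset.mem_univ j),
          Finset.sdiff_singleton_eq_erase]
        omega
      have hKdeg : degB K + 1 ≤ degB B'' := by
        have hinj : Set.InjOn (fun b => Function.update b j (b j - 1)) (B'' : Set (Fin d → ℕ)) := by
          intro a ha b hb hab
          have haj : a j ≠ 0 := (Finset.mem_filter.mp (Finset.mem_coe.mp ha)).2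
          have hbj : b j ≠ 0 := (Finset.mem_filter.mp (Finset.mem_coe.mp hb)).2
          funext t
          by_cases htj : t = j
          · subst htj
            have := congrFun hab t
            simp only [Function.update_self] at this
            omega
          · have := congrFun hab t
            simpa [Function.update_of_ne htj] using this
        have hinj2 : ∀ a ∈ B'', ∀ b ∈ B'',
            Function.update a j (a j - 1) = Function.update b j (b j - 1) → a = b :=
          fun a ha b hb hab => hinj (Finset.mem_coe.mpr ha) (Finset.mem_coe.mpr hb) hab
        have : degB K = ∑ b ∈ B'', ∑ t, Function.update b j (b j - 1) t := by
          rw [degB, hKdef, Finset.sum_image hinj2]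
        rw [this]
        calc (∑ b ∈ B'', ∑ t, Function.update b j (b j - 1) t) + 1
            ≤ (∑ b ∈ B'', ∑ t, Function.update b j (b j - 1) t) + B''.card :=
              Nat.add_le_add_left (Finset.card_pos.mpr ⟨b0, hb0B''⟩) _
          _ = ∑ b ∈ B'', ((∑ t, Function.update b j (b j - 1) t) + 1) := by
              rw [Finset.sum_add_distrib, Finset.sum_const, smul_eq_mul, mul_one]
          _ = ∑ b ∈ B'', ∑ t, b t := Finset.sum_congr rfl
              (fun b hb => hFupd b (Finset.mem_filter.mp hb).2)
          _ = degB B'' := rfl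
      set Bd := B' ∪ K with hBddef
      have hdegBd : degB Bd ≤ q := by
        have h1 : degB Bd ≤ degB B' + degB K := by
          rw [degB, hBddef, ← Finset.union_sdiff_self_eq_union,
            Finset.sum_union Finset.disjoint_sdiff]
          exact Nat.add_le_add_left (Finset.sum_le_sum_of_subset (Finset.sdiff_subset)) _
        omega
      have hsuppBd : ∀ b ∈ Bd, ∀ t, b t ≠ 0 → t ∈ S ∧ t ≠ i := by
        intro b hb t ht
        rcases Finset.mem_union.mp hb with hb' | hbK
        · exact hsupp b (Finset.mem_of_mem_filter _ hb') t ht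
        · obtain ⟨b1, hb1, rfl⟩ := hKmem b hbK
          by_cases htj : t = j
          · subst htj; exact ⟨hjS, hji⟩
          · rw [Function.update_of_ne htj] at ht
            exact hsupp b1 (Finset.mem_of_mem_filter _ hb1) t ht
      have hBled : JB g B ≤ JB g Bd := by
        apply JB_le_of_dvd
        intro b hb
        by_cases hbj : b j = 0
        · exact ⟨b, Finset.mem_union_left _ (Finset.mem_filter.mpr ⟨hb, hbj⟩), 1, (one_mul _).symm⟩
        · refine ⟨Function.update b j (b j - 1), Finset.mem_union_right _ ?_, g j, mon_eq_mul hbj⟩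
          exact Finset.mem_image.mpr ⟨b, Finset.mem_filter.mpr ⟨hb, hbj⟩, rfl⟩
      have hKmul : ∀ z ∈ JB g K, g j * z ∈ JB g B := by
        intro z hz
        refine Submodule.span_induction ?_ ?_ ?_ ?_ hz
        · rintro w ⟨k, hk, rfl⟩
          obtain ⟨b, hb, rfl⟩ := hKmem k (by exact_mod_cast hk)
          rw [← mon_eq_mul (Finset.mem_filter.mp hb).2]
          exact mon_mem_JB (Finset.mem_of_mem_filter _ hb)
        · simp
        · intro a b _ _ ha hb; rw [mul_add]; exact add_mem ha hb
        · intro a b _ hb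
          have : g j * (a • b) = a * (g j * b) := by rw [smul_eq_mul]; ring
          rw [this]
          exact Ideal.mul_mem_left _ _ hb
      -- key quotient fact
      have hcarde : (S.erase j).card ≤ p := by
        rw [Finset.card_erase_of_mem hjS]; omega
      have hie : i ∈ S.erase j := Finset.mem_erase.mpr ⟨Ne.symm hji, hi⟩
      have hsuppB' : ∀ b ∈ B', ∀ t, b t ≠ 0 → t ∈ S.erase j ∧ t ≠ i := by
        intro b hb t ht
        obtain ⟨h1, h2⟩ := hsupp b (Finset.mem_of_mem_filter _ hb) t ht
        have hbj : b j = 0 := (Finset.mem_filter.mp hb).2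
        refine ⟨Finset.mem_erase.mpr ⟨?_, h1⟩, h2⟩
        intro htj; subst htj; exact ht hbj
      have key : ∀ w : A', w * g i ∈ JB g B' ⊔ Ideal.span {g j ^ 1} →
          w ∈ JB g B' ⊔ Ideal.span {g j ^ 1} := by
        intro w hw
        have hpq : HP (fun t => Ideal.Quotient.mk (Ideal.span {g j ^ 1}) (g t)) (S.erase j) :=
          HP_quotient hp hjS one_ne_zero
        have hw' : (Ideal.Quotient.mk (Ideal.span {g j ^ 1})) w *
            (fun t => Ideal.Quotient.mk (Ideal.span {g j ^ 1}) (g t)) i ∈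
            JB (fun t => Ideal.Quotient.mk (Ideal.span {g j ^ 1}) (g t)) B' := by
          rw [← JB_map]
          have : (Ideal.Quotient.mk (Ideal.span {g j ^ 1})) (w * g i) ∈
              Ideal.map (Ideal.Quotient.mk (Ideal.span {g j ^ 1})) (JB g B') :=
            Ideal.mem_quotient_iff_mem_sup.mpr hw
          rw [RingHom.map_mul] at this
          exact this
        have := ihp (degB B') (fun t => Ideal.Quotient.mk (Ideal.span {g j ^ 1}) (g t))
          (S.erase j) hpq hcarde i hie B' le_rfl hsuppB' _ hw'
        rw [← JB_map] at this
        exact Ideal.mem_quotient_iff_mem_sup.mp this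
      have hdegB' : degB B' ≤ q := by omega
      have hsuppB'2 : ∀ b ∈ B', ∀ t, b t ≠ 0 → t ∈ S ∧ t ≠ j := by
        intro b hb t ht
        obtain ⟨h1, _⟩ := hsupp b (Finset.mem_of_mem_filter _ hb) t ht
        have hbj : b j = 0 := (Finset.mem_filter.mp hb).2
        exact ⟨h1, fun htj => ht (htj ▸ hbj)⟩
      have hcolB' : ∀ z' : A', z' * g j ∈ JB g B' → z' ∈ JB g B' := by
        intro z' hz'
        exact ihq g S hp hS j hjS B' hdegB' hsuppB'2 z' hz'
      -- step i
      have hxBd : x ∈ JB g B' ⊔ JB g K := by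
        rw [← JB_union]
        exact ihq g S hp hS i hi Bd hdegBd hsuppBd x (hBled hx)
      obtain ⟨y₁, hy₁, u, hu, hxdec⟩ := Submodule.mem_sup.mp hxBd
      -- step ii
      have hui : u * g i ∈ JB g B := by
        have : u * g i = x * g i - y₁ * g i := by rw [← hxdec]; ring
        rw [this]
        exact sub_mem hx (Ideal.mul_mem_right _ _ (hB'le hy₁))
      -- step iii
      have hJBle3 : JB g B ≤ JB g B' ⊔ Ideal.span {g j} * JB g K := by
        rw [JB, Ideal.span_le]
        rintro w ⟨b, hb, rfl⟩
        rw [Finset.mem_coe] at hb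
        by_cases hbj : b j = 0
        · exact Submodule.mem_sup_left (mon_mem_JB (Finset.mem_filter.mpr ⟨hb, hbj⟩))
        · refine Submodule.mem_sup_right ?_
          rw [mon_eq_mul hbj]
          exact Ideal.mul_mem_mul (Ideal.mem_span_singleton_self _)
            (mon_mem_JB (Finset.mem_image.mpr ⟨b, Finset.mem_filter.mpr ⟨hb, hbj⟩, rfl⟩))
      obtain ⟨y, hy, w', hw', heq⟩ := Submodule.mem_sup.mp (hJBle3 hui)
      obtain ⟨w, hwK, hw'eq⟩ := Ideal.mem_span_singleton_mul.mp hw'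
      -- step iv
      have hu4 : u ∈ JB g B' ⊔ Ideal.span {g j ^ 1} := by
        refine key u ?_
        have : u * g i = y + g j ^ 1 * w := by rw [pow_one, hw'eq, heq]
        rw [this]
        exact Submodule.add_mem _ (Submodule.mem_sup_left hy)
          (Submodule.mem_sup_right (Ideal.mul_mem_right _ _ (Ideal.mem_span_singleton_self _)))
      obtain ⟨p₁, hp₁, qg, hqg, hueq⟩ := Submodule.mem_sup.mp hu4
      obtain ⟨q₁, hq₁eq⟩ := Ideal.mem_span_singleton'.mp hqg
      rw [pow_one] at hq₁eq
      -- step v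
      have hv : (q₁ * g i - w) * g j ∈ JB g B' := by
        have h1 : u * g i = y + g j * w := by rw [hw'eq, heq]
        have h2 : u = p₁ + q₁ * g j := by rw [← hueq, ← hq₁eq]
        have h3 : (q₁ * g i - w) * g j = y - p₁ * g i := by
          linear_combination h1 - g i * h2
        rw [h3]
        exact sub_mem hy (Ideal.mul_mem_right _ _ hp₁)
      have hv2 : q₁ * g i - w ∈ JB g B' := hcolB' _ hv
      -- step vi
      have hq₁i : q₁ * g i ∈ JB g Bd := by
        rw [JB_union]
        have : q₁ * g i = (q₁ * g i - w) + w := by ring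
        rw [this]
        exact Submodule.add_mem _ (Submodule.mem_sup_left hv2) (Submodule.mem_sup_right hwK)
      have hq₁Bd : q₁ ∈ JB g B' ⊔ JB g K := by
        rw [← JB_union]
        exact ihq g S hp hS i hi Bd hdegBd hsuppBd q₁ (by rw [JB_union] at hq₁i ⊢; exact hq₁i)
      obtain ⟨p₂, hp₂, k₂, hk₂, hq₁dec⟩ := Submodule.mem_sup.mp hq₁Bd
      -- step vii : assemble
      have hxeq : x = y₁ + p₁ + p₂ * g j + g j * k₂ := by
        rw [← hxdec, ← hueq, ← hq₁eq, ← hq₁dec]; ring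
      rw [hxeq]
      refine add_mem (add_mem (add_mem (hB'le hy₁) (hB'le hp₁))
        (Ideal.mul_mem_right _ _ (hB'le hp₂))) (hKmul k₂ hk₂)

lemma colon_of_smulreg {J : Ideal A} {r : A}
    (h : IsSMulRegular (A ⧸ (J • (⊤ : Submodule A A))) r) :
    ∀ z : A, z * r ∈ J → z ∈ J := by
  intro z hz
  have hJ : J • (⊤ : Submodule A A) = J := by rw [smul_eq_mul, mul_top]
  have h1 : r • (Submodule.Quotient.mk z : A ⧸ (J • (⊤ : Submodule A A))) =
      r • (Submodule.Quotient.mk 0) := by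
    rw [← Submodule.Quotient.mk_smul, ← Submodule.Quotient.mk_smul,
      Submodule.Quotient.eq, hJ]
    have : r • z - r • (0 : A) = z * r := by rw [smul_zero, sub_zero, smul_eq_mul, mul_comm]
    rwa [this]
  have h2 := h h1
  rwa [Submodule.Quotient.eq, sub_zero, hJ] at h2

open RingTheory.Sequence in
lemma HWI_univ {R : Type*} [CommRing R] [IsNoetherianRing R] [IsLocalRing R]
    (f : Fin d → R) (hreg : RingTheory.Sequence.IsRegular R (List.ofFn f)) :
    HWI f Finset.univ := by
  classical
  intro i _ T _ hiT z hz
  set L : List (Fin d) := T.toList ++ i :: (Finset.univ \ insert i T).toList with hLdef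
  have hnodup : L.Nodup := by
    rw [hLdef, List.nodup_append]
    refine ⟨Finset.nodup_toList T, ?_, ?_⟩
    · rw [List.nodup_cons]
      constructor
      · intro hmem
        rw [Finset.mem_toList, Finset.mem_sdiff] at hmem
        exact hmem.2 (Finset.mem_insert_self i T)
      · exact Finset.nodup_toList _
    · intro a ha b hb hab; subst hab
      rw [Finset.mem_toList] at ha
      rcases List.mem_cons.mp hb with rfl | hbmem
      · exact hiT ha
      · rw [Finset.mem_toList, Finset.mem_sdiff] at hbmem
        exact hbmem.2 (Finset.mem_insert_of_mem ha)
  have htofin : L.toFinset = Finset.univ := by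
    rw [hLdef]
    ext t
    simp only [List.toFinset_append, List.toFinset_cons, Finset.mem_union,
      Finset.mem_insert, List.mem_toFinset, Finset.mem_toList, Finset.mem_sdiff,
      Finset.mem_univ, iff_true, true_and]
    tauto
  have hperm : (List.finRange d).Perm L :=
    List.perm_of_nodup_nodup_toFinset_eq (List.nodup_finRange d) hnodup
      (by rw [htofin, List.toFinset_finRange])
  have hregL : RingTheory.Sequence.IsRegular R (L.map f) := by
    refine IsLocalRing.isRegular_of_perm ?_ (hperm.map f)
    rwa [← List.ofFn_eq_map]
  set k := T.card with hkdef
  have hklen : k < (L.map f).length := by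
    rw [List.length_map, hLdef, List.length_append, List.length_cons, Finset.length_toList]
    omega
  have hsmul := hregL.toIsWeaklyRegular.regular_mod_prev k hklen
  have htake : (L.map f).take k = T.toList.map f := by
    rw [hLdef, List.map_append, List.take_left']
    rw [List.length_map, Finset.length_toList]
  have hlen1 : (T.toList.map f).length = k := by
    rw [List.length_map, Finset.length_toList]
  have hL2 : List.map f L =
      (List.map f T.toList) ++ (f i :: List.map f (Finset.univ \ insert i T).toList) := by
    rw [hLdef, List.map_append, List.map_cons]
  have hgetelem : (L.map f)[k] = f i := by
    rw [List.getElem_of_eq hL2]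
    rw [List.getElem_append_right (by omega)]
    simp [hlen1]
  have hofList : Ideal.ofList ((L.map f).take k) = Ideal.span (f '' ↑T) := by
    rw [htake]
    show Ideal.span {r | r ∈ T.toList.map f} = _
    congr 1
    ext r
    simp only [List.mem_map, Finset.mem_toList, Set.mem_setOf_eq, Set.mem_image,
      Finset.mem_coe]
  rw [hofList, hgetelem] at hsmul
  exact colon_of_smulreg hsmul z hz

lemma colon_pure_step {g : Fin d → A} {S : Finset (Fin d)} (hp : HP g S) {c : Fin d → ℕ}
    {i : Fin d} (hi : i ∈ S) (hci : 2 ≤ c i) (hcS : ∀ t, c t ≠ 0 → t ∈ S) :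
    ∀ x : A, x * g i ∈ P g c → x ∈ P g (Function.update c i (c i - 1)) := by
  classical
  intro x hx
  have hsplit : P g c = P g (Function.update c i 0) ⊔ Ideal.span {g i ^ c i} :=
    P_split (by omega)
  have hsplit2 : P g (Function.update c i (c i - 1)) =
      P g (Function.update c i 0) ⊔ Ideal.span {g i ^ (c i - 1)} := by
    rw [P_split (i := i) (by simp [Function.update]; omega), Function.update_idem,
      Function.update_self]
  rw [hsplit] at hx
  obtain ⟨y, hy, w, hw, hxw⟩ := Submodule.mem_sup.mp hx
  obtain ⟨a, ha⟩ := Ideal.mem_span_singleton'.mp hw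
  have hpow : g i ^ (c i - 1) * g i = g i ^ c i := by
    rw [← pow_succ]; congr 1; omega
  have hmem : (x - a * g i ^ (c i - 1)) * g i ∈ P g (Function.update c i 0) := by
    have : (x - a * g i ^ (c i - 1)) * g i = x * g i - a * g i ^ c i := by
      rw [← hpow]; ring
    rw [this, ← hxw, ← ha]
    simpa using hy
  have hsupp : ∀ b ∈ pureB (Function.update c i 0), ∀ t, b t ≠ 0 → t ∈ S ∧ t ≠ i := by
    intro b hb t ht
    simp only [pureB, Finset.mem_image, mem_esupp] at hb
    obtain ⟨s, hs, rfl⟩ := hb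
    have hts : t = s := by
      by_contra hne
      exact ht (Pi.single_eq_of_ne hne _)
    subst hts
    by_cases hti : t = i
    · subst hti; simp [Function.update] at hs
    · rw [Function.update_of_ne hti] at hs
      exact ⟨hcS t hs, hti⟩
  have := Mgen S.card (degB (pureB (Function.update c i 0))) g S hp le_rfl i hi
    (pureB (Function.update c i 0)) le_rfl hsupp _ hmem
  rw [hsplit2]
  have hxeq : x = (x - a * g i ^ (c i - 1)) + a * g i ^ (c i - 1) := by ring
  rw [hxeq]
  exact Submodule.add_mem _ (Submodule.mem_sup_left this)
    (Submodule.mem_sup_right (Ideal.mul_mem_left _ _ (Ideal.mem_span_singleton_self _)))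

lemma colon_mon {g : Fin d → A} {S : Finset (Fin d)} (hp : HP g S) :
    ∀ (n : ℕ) (b c : Fin d → ℕ), (∑ t, b t) ≤ n → (∀ t, c t ≠ 0 → t ∈ S) →
    (∀ t, b t ≠ 0 → b t < c t) →
    ∀ x : A, x * mon g b ∈ P g c → x ∈ P g (c - b) := by
  intro n
  induction n with
  | zero =>
    intro b c hn hcS hbc x hx
    have hb0 : b = 0 := by
      funext t
      have := Finset.sum_eq_zero_iff.mp (Nat.le_zero.mp hn) t (Finset.mem_univ t)
      exact this
    subst hb0
    have : c - 0 = c := by funext t; simp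
    rw [this]
    rwa [mon_zero, mul_one] at hx
  | succ n ih =>
    intro b c hn hcS hbc x hx
    by_cases hb0 : b = 0
    · subst hb0
      have : c - 0 = c := by funext t; simp
      rw [this]
      rwa [mon_zero, mul_one] at hx
    obtain ⟨t0, ht0⟩ := Function.ne_iff.mp hb0
    rw [Pi.zero_apply] at ht0
    have hbt0 : b t0 < c t0 := hbc t0 ht0
    have ht0S : t0 ∈ S := hcS t0 (by omega)
    have hct0 : 2 ≤ c t0 := by omega
    -- x * mon b = (x * mon (update b t0 (b t0 - 1))) * g t0
    have hmon : x * mon g b = (x * mon g (Function.update b t0 (b t0 - 1))) * g t0 := by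
      rw [mon_eq_mul (j := t0) ht0]; ring
    rw [hmon] at hx
    have hstep := colon_pure_step hp ht0S hct0 hcS _ hx
    -- now apply ih with c' := update c t0 (c t0 - 1), b' := update b t0 (b t0 - 1)
    have hsum' : (∑ t, Function.update b t0 (b t0 - 1) t) ≤ n := by
      rw [Finset.sum_update_of_mem (Finset.mem_univ t0),
        Finset.sdiff_singleton_eq_erase] at *
      have : (∑ t, b t) = b t0 + ∑ x ∈ Finset.univ.erase t0, b x := by
        rw [← Finset.add_sum_erase _ b (Finset.mem_univ t0)]
      omega
    have hcS' : ∀ t, Function.update c t0 (c t0 - 1) t ≠ 0 → t ∈ S := by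
      intro t ht
      by_cases htt : t = t0
      · subst htt; exact ht0S
      · rw [Function.update_of_ne htt] at ht; exact hcS t ht
    have hbc' : ∀ t, Function.update b t0 (b t0 - 1) t ≠ 0 →
        Function.update b t0 (b t0 - 1) t < Function.update c t0 (c t0 - 1) t := by
      intro t ht
      by_cases htt : t = t0
      · subst htt; simp only [Function.update_self] at ht ⊢; omega
      · rw [Function.update_of_ne htt] at ht ⊢
        rw [Function.update_of_ne htt]
        exact hbc t ht
    have := ih (Function.update b t0 (b t0 - 1)) (Function.update c t0 (c t0 - 1))
      hsum' hcS' hbc' x hstep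
    have hceq : Function.update c t0 (c t0 - 1) - Function.update b t0 (b t0 - 1) = c - b := by
      funext t
      by_cases htt : t = t0
      · subst htt; simp only [Pi.sub_apply, Function.update_self]; omega
      · simp only [Pi.sub_apply, Function.update_of_ne htt]
    rwa [hceq] at this

open scoped Classical in
/-- exponent vectors supported in `S` with total degree `k` -/
noncomputable def Dset (S : Finset (Fin d)) (k : ℕ) : Finset (Fin d → ℕ) :=
  ((Finset.univ : Finset (Fin d → Fin (k + 1))).image
    (fun b => fun t => ((b t : ℕ)))).filter
    (fun b => (∀ t, b t ≠ 0 → t ∈ S) ∧ ∑ t, b t = k)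

lemma mem_Dset {S : Finset (Fin d)} {k : ℕ} {b : Fin d → ℕ} :
    b ∈ Dset S k ↔ (∀ t, b t ≠ 0 → t ∈ S) ∧ ∑ t, b t = k := by
  classical
  unfold Dset
  rw [Finset.mem_filter]
  constructor
  · exact fun h => by
      refine ⟨?_, ?_⟩
      · exact h.2.1
      · exact h.2.2
  · intro h
    refine ⟨?_, h⟩
    rw [Finset.mem_image]
    refine ⟨fun t => ⟨b t, ?_⟩, Finset.mem_univ _, rfl⟩
    have : b t ≤ ∑ s, b s := Finset.single_le_sum (fun _ _ => Nat.zero_le _) (Finset.mem_univ t)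
    omega

lemma span_pow_eq_JB (g : Fin d → A) (S : Finset (Fin d)) (k : ℕ) :
    (Ideal.span (g '' ↑S)) ^ k = JB g (Dset S k) := by
  classical
  induction k with
  | zero =>
    rw [pow_zero]
    have h0 : Dset S 0 = {0} := by
      ext b
      rw [mem_Dset, Finset.mem_singleton]
      constructor
      · rintro ⟨_, hsum⟩
        funext t
        exact Finset.sum_eq_zero_iff.mp hsum t (Finset.mem_univ t)
      · rintro rfl
        exact ⟨fun t ht => absurd rfl ht, Finset.sum_const_zero⟩
    rw [h0, JB_singleton, mon_zero, Ideal.span_singleton_one, Ideal.one_eq_top]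
  | succ k ih =>
    rw [pow_succ, ih]
    apply le_antisymm
    · rw [JB, JB, Ideal.span_mul_span']
      rw [Ideal.span_le]
      rintro w ⟨w1, ⟨b, hb, rfl⟩, w2, ⟨t0, ht0, rfl⟩, rfl⟩
      rw [Finset.mem_coe, mem_Dset] at hb
      refine Ideal.subset_span ⟨b + Pi.single t0 1, ?_, ?_⟩
      · rw [Finset.mem_coe, mem_Dset]
        constructor
        · intro t ht
          by_cases htt : t = t0
          · subst htt; rwa [Finset.mem_coe] at ht0
          · rw [Pi.add_apply, Pi.single_eq_of_ne htt, add_zero] at ht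
            exact hb.1 t ht
        · simp only [Pi.add_apply]
          rw [Finset.sum_add_distrib, hb.2]
          have : ∑ t, Pi.single t0 1 t = 1 := by
            rw [Finset.sum_eq_single t0]
            · simp
            · intro s _ hs; exact Pi.single_eq_of_ne hs _
            · intro h; exact absurd (Finset.mem_univ t0) h
          omega
      · rw [mon_add, mon_single, pow_one]
    · rw [JB]
      rw [Ideal.span_le]
      rintro w ⟨b, hb, rfl⟩
      rw [Finset.mem_coe, mem_Dset] at hb
      have hsum : ∑ t, b t = k + 1 := hb.2
      have hex : ∃ t0, b t0 ≠ 0 := by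
        by_contra h
        push_neg at h
        rw [Finset.sum_congr rfl (fun t _ => h t), Finset.sum_const_zero] at hsum
        exact Nat.succ_ne_zero k hsum.symm
      obtain ⟨t0, ht0⟩ := hex
      have ht0S : t0 ∈ S := hb.1 t0 ht0
      rw [mon_eq_mul (j := t0) ht0,
        mul_comm (g t0) (mon g (Function.update b t0 (b t0 - 1)))]
      refine Ideal.mul_mem_mul ?_ (Ideal.subset_span ⟨t0, by simpa using ht0S, rfl⟩)
      apply mon_mem_JB
      rw [mem_Dset]
      constructor
      · intro t ht
        by_cases htt : t = t0
        · subst htt; exact ht0S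
        · rw [Function.update_of_ne htt] at ht
          exact hb.1 t ht
      · rw [Finset.sum_update_of_mem (Finset.mem_univ t0), Finset.sdiff_singleton_eq_erase]
        have h2 : ∑ t, b t = b t0 + ∑ x ∈ Finset.univ.erase t0, b x := by
          rw [← Finset.add_sum_erase _ b (Finset.mem_univ t0)]
        omega

lemma pigeonhole (g : Fin d → A) (S : Finset (Fin d)) (l : ℕ) :
    (Ideal.span (g '' ↑S)) ^ (S.card * (l - 1) + 1) ≤
      JB g (S.image fun t => Pi.single t l) := by
  classical
  rw [span_pow_eq_JB]
  apply JB_le_of_dvd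
  intro b hb
  rw [mem_Dset] at hb
  have hex : ∃ t0 ∈ S, l ≤ b t0 := by
    by_contra hcon
    push_neg at hcon
    have h1 : ∑ t ∈ S, b t = ∑ t, b t := by
      apply Finset.sum_subset (Finset.subset_univ S)
      intro t _ ht
      by_contra hne
      exact ht (hb.1 t hne)
    have h2 : ∑ t ∈ S, b t ≤ ∑ _t ∈ S, (l - 1) :=
      Finset.sum_le_sum (fun t ht => by have := hcon t ht; omega)
    rw [Finset.sum_const, smul_eq_mul] at h2
    have h3 := hb.2
    omega
  obtain ⟨t0, ht0S, ht0⟩ := hex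
  refine ⟨Pi.single t0 l, Finset.mem_image.mpr ⟨t0, ht0S, rfl⟩,
    mon g (b - Pi.single t0 l), ?_⟩
  rw [← mon_add]
  congr 1
  funext t
  by_cases htt : t = t0
  · subst htt
    simp only [Pi.add_apply, Pi.sub_apply, Pi.single_eq_same]
    omega
  · simp only [Pi.add_apply, Pi.sub_apply, Pi.single_eq_of_ne htt]
    omega

/-- the auxiliary ideals in the peeling argument -/
noncomputable def AT (g : Fin d → A) (S' : Finset (Fin d)) (l m τ : ℕ) : Ideal A :=
  (Ideal.span (g '' ↑S')) ^ (m - τ - S'.card + 1) ⊔ JB g (S'.image fun t => Pi.single t l)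

lemma SMAIN (l : ℕ) (hl : 1 ≤ l) : ∀ (p : ℕ) {A' : Type u} [CommRing A'] (g : Fin d → A')
    (S : Finset (Fin d)), HP g S → S.card ≤ p → ∀ m : ℕ, S.card ≤ m → m ≤ S.card * l →
    ∀ x : A', (∀ c : Fin d → ℕ, (∀ t ∈ S, 1 ≤ c t ∧ c t ≤ l) → (∀ t ∉ S, c t = 0) →
      (∑ t, c t) = m → x ∈ P g c) →
    x ∈ (Ideal.span (g '' ↑S)) ^ (m - S.card + 1) ⊔ JB g (S.image fun t => Pi.single t l) := by
  have base : ∀ {A' : Type u} [CommRing A'] (g : Fin d → A')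
      (S : Finset (Fin d)) (_ : S = ∅) (m : ℕ) (_ : m ≤ S.card * l) (x : A'),
      (∀ c : Fin d → ℕ, (∀ t ∈ S, 1 ≤ c t ∧ c t ≤ l) → (∀ t ∉ S, c t = 0) →
      (∑ t, c t) = m → x ∈ P g c) →
      x ∈ (Ideal.span (g '' ↑S)) ^ (m - S.card + 1) ⊔
        JB g (S.image fun t => Pi.single t l) := by
    intro A' _ g S hSe m hm2 x hx
    subst hSe
    have hm0 : m = 0 := by simpa using hm2
    subst hm0
    have := hx 0 (by simp) (fun t _ => rfl) (by simp)
    rw [P_zero, Ideal.mem_bot] at this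
    subst this
    exact Submodule.zero_mem _
  intro p
  induction p with
  | zero =>
    intro A' _ g S hp hS m hm1 hm2 x hx
    have hSe : S = ∅ := by
      rw [← Finset.card_eq_zero]; omega
    exact base g S hSe m hm2 x hx
  | succ p ihp =>
    intro A' _ g S hp hS m hm1 hm2 x hx
    classical
    by_cases hSe : S = ∅
    · exact base g S hSe m hm2 x hx
    obtain ⟨j, hjS⟩ := Finset.nonempty_iff_ne_empty.mpr hSe
    have he1 : 1 ≤ S.card := Finset.card_pos.mpr ⟨j, hjS⟩
    have he' : (S.erase j).card = S.card - 1 := Finset.card_erase_of_mem hjS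
    have hSmul : S.card * l = (S.erase j).card * l + l := by
      rw [he']
      conv_lhs => rw [show S.card = (S.card - 1) + 1 by omega]
      rw [add_mul, one_mul]
    have he'l : (S.erase j).card ≤ (S.erase j).card * l :=
      Nat.le_mul_of_pos_right _ (by omega)
    set t₁ := max 1 (m - (S.erase j).card * l) with ht₁def
    set t₂ := min l (m - S.card + 1) with ht₂def
    have ht12 : t₁ ≤ t₂ := by
      rw [ht₁def, ht₂def]
      simp only [le_min_iff, max_le_iff]
      omega
    have hS'sub : (S.erase j) ⊆ S := Finset.erase_subset j S
    have hIl'le : JB g ((S.erase j).image fun t => Pi.single t l) ≤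
        JB g (S.image fun t => Pi.single t l) :=
      JB_mono (Finset.image_subset_image hS'sub)
    have hspanle : Ideal.span (g '' ↑(S.erase j)) ≤ Ideal.span (g '' ↑S) :=
      Ideal.span_mono (Set.image_mono (by exact_mod_cast hS'sub))
    have hgjS : g j ∈ Ideal.span (g '' ↑S) :=
      Ideal.subset_span ⟨j, by simpa using hjS, rfl⟩
    -- A τ is a monomial ideal
    have hAJB : ∀ τ, AT g (S.erase j) l m τ =
        JB g (Dset (S.erase j) (m - τ - (S.erase j).card + 1) ∪
          ((S.erase j).image fun t => Pi.single t l)) := by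
      intro τ
      rw [JB_union, AT, span_pow_eq_JB]
    have hAmono : ∀ τ τ', τ ≤ τ' → AT g (S.erase j) l m τ ≤ AT g (S.erase j) l m τ' := by
      intro τ τ' h
      exact sup_le_sup_right (Ideal.pow_le_pow_right (by omega)) _
    have hcol : ∀ τ (z : A'), z * g j ∈ AT g (S.erase j) l m τ →
        z ∈ AT g (S.erase j) l m τ := by
      intro τ z hz
      rw [hAJB τ] at hz ⊢
      refine Mgen S.card (degB _) g S hp le_rfl j hjS _ le_rfl ?_ z hz
      intro b hb t ht
      rcases Finset.mem_union.mp hb with hb1 | hb2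
      · have := (mem_Dset.mp hb1).1 t ht
        exact ⟨Finset.mem_of_mem_erase this, (Finset.mem_erase.mp this).1⟩
      · obtain ⟨s, hs, rfl⟩ := Finset.mem_image.mp hb2
        have hts : t = s := by
          by_contra hne
          exact ht (Pi.single_eq_of_ne hne _)
        subst hts
        exact ⟨Finset.mem_of_mem_erase hs, (Finset.mem_erase.mp hs).1⟩
    have hcolpow : ∀ τ s (z : A'), z * g j ^ s ∈ AT g (S.erase j) l m τ →
        z ∈ AT g (S.erase j) l m τ := fun τ s => powcol (hcol τ) s
    -- A t₁ ≤ G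
    have hA1G : AT g (S.erase j) l m t₁ ≤
        (Ideal.span (g '' ↑S)) ^ (m - S.card + 1) ⊔
          JB g (S.image fun t => Pi.single t l) := by
      rw [AT]
      by_cases hcase : m ≤ (S.erase j).card * l + 1
      · have ht₁1 : t₁ = 1 := by rw [ht₁def]; omega
        rw [ht₁1]
        have hexp : m - 1 - (S.erase j).card + 1 = m - S.card + 1 := by omega
        rw [hexp]
        exact sup_le (le_trans (Ideal.pow_right_mono hspanle _) le_sup_left)
          (le_trans hIl'le le_sup_right)
      · have ht₁m : t₁ = m - (S.erase j).card * l := by rw [ht₁def]; omega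
        have hexp : m - t₁ - (S.erase j).card + 1 = (S.erase j).card * (l - 1) + 1 := by
          rw [ht₁m]
          have h2 : (S.erase j).card * (l - 1) + (S.erase j).card = (S.erase j).card * l := by
            conv_rhs => rw [show l = (l - 1) + 1 by omega]
            rw [Nat.mul_succ]
          omega
        rw [hexp]
        refine sup_le (le_trans (pigeonhole g (S.erase j) l) ?_) (le_trans hIl'le le_sup_right)
        exact le_trans hIl'le le_sup_right
    -- A (τ+1) * gj^τ ≤ G
    have hAmulG : ∀ τ (a : A'), τ + 1 ≤ t₂ → a ∈ AT g (S.erase j) l m (τ + 1) →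
        a * g j ^ τ ∈ (Ideal.span (g '' ↑S)) ^ (m - S.card + 1) ⊔
          JB g (S.image fun t => Pi.single t l) := by
      intro τ a hτ2 ha
      rw [AT] at ha
      obtain ⟨a1, ha1, a2, ha2, haeq⟩ := Submodule.mem_sup.mp ha
      have h1 : a1 * g j ^ τ ∈ (Ideal.span (g '' ↑S)) ^ (m - S.card + 1) := by
        have hpowmul : (Ideal.span (g '' ↑S)) ^ (m - (τ+1) - (S.erase j).card + 1) *
            (Ideal.span (g '' ↑S)) ^ τ = (Ideal.span (g '' ↑S)) ^ (m - S.card + 1) := by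
          rw [← pow_add]
          congr 1
          have := min_le_right l (m - S.card + 1)
          omega
        rw [← hpowmul]
        exact Ideal.mul_mem_mul (Ideal.pow_right_mono hspanle _ ha1)
          (Ideal.pow_mem_pow hgjS τ)
      have h2 : a2 * g j ^ τ ∈ JB g (S.image fun t => Pi.single t l) :=
        Ideal.mul_mem_right _ _ (hIl'le ha2)
      rw [← haeq, add_mul]
      exact Submodule.add_mem _ (Submodule.mem_sup_left h1) (Submodule.mem_sup_right h2)
    -- the claim via quotient and induction hypothesis
    have claim : ∀ τ, t₁ ≤ τ → τ ≤ t₂ →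
        x ∈ AT g (S.erase j) l m τ ⊔ Ideal.span {g j ^ τ} := by
      intro τ hτ1 hτ2
      have hτpos : 1 ≤ τ := le_trans (le_max_left _ _) hτ1
      have hτl : τ ≤ l := le_trans hτ2 (min_le_left _ _)
      have hτm : τ ≤ m - S.card + 1 := le_trans hτ2 (min_le_right _ _)
      have hp' : HP (fun t => Ideal.Quotient.mk (Ideal.span {g j ^ τ}) (g t)) (S.erase j) :=
        HP_quotient hp hjS (by omega)
      have hx' : ∀ c' : Fin d → ℕ, (∀ t ∈ S.erase j, 1 ≤ c' t ∧ c' t ≤ l) →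
          (∀ t ∉ S.erase j, c' t = 0) → (∑ t, c' t) = m - τ →
          Ideal.Quotient.mk (Ideal.span {g j ^ τ}) x ∈
            P (fun t => Ideal.Quotient.mk (Ideal.span {g j ^ τ}) (g t)) c' := by
        intro c' h1 h2 h3
        have hc'j : c' j = 0 := h2 j (Finset.notMem_erase j S)
        have hvalid3 : (∑ t, Function.update c' j τ t) = m := by
          rw [Finset.sum_update_of_mem (Finset.mem_univ j), Finset.sdiff_singleton_eq_erase]
          have h4 : ∑ t, c' t = c' j + ∑ t ∈ Finset.univ.erase j, c' t :=
            (Finset.add_sum_erase _ c' (Finset.mem_univ j)).symm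
          omega
        have hc := hx (Function.update c' j τ) ?_ ?_ hvalid3
        · have hsplit : P g (Function.update c' j τ) = P g c' ⊔ Ideal.span {g j ^ τ} := by
            rw [P_split (i := j) (by simp [Function.update]; omega), Function.update_idem,
              Function.update_self]
            congr 1
            rw [Function.update_eq_self_iff.mpr hc'j.symm]
          have hPmap : P (fun t => Ideal.Quotient.mk (Ideal.span {g j ^ τ}) (g t)) c' =
              Ideal.map (Ideal.Quotient.mk (Ideal.span {g j ^ τ})) (P g c') := by
            rw [P, P, JB_map]
          rw [hPmap]
          exact Ideal.mem_quotient_iff_mem_sup.mpr (by rw [← hsplit]; exact hc)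
        · intro t htS
          by_cases htj : t = j
          · subst htj
            rw [Function.update_self]
            exact ⟨hτpos, hτl⟩
          · rw [Function.update_of_ne htj]
            exact h1 t (Finset.mem_erase.mpr ⟨htj, htS⟩)
        · intro t htS
          have htj : t ≠ j := fun h => htS (h ▸ hjS)
          rw [Function.update_of_ne htj]
          exact h2 t (fun h => htS (Finset.mem_of_mem_erase h))
      have hIH := ihp (fun t => Ideal.Quotient.mk (Ideal.span {g j ^ τ}) (g t))
        (S.erase j) hp' (by omega) (m - τ) (by omega) (by omega) _ hx'
      have hmapID : Ideal.map (Ideal.Quotient.mk (Ideal.span {g j ^ τ}))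
          (AT g (S.erase j) l m τ) =
          (Ideal.span ((fun t => Ideal.Quotient.mk (Ideal.span {g j ^ τ}) (g t)) ''
            ↑(S.erase j))) ^ (m - τ - (S.erase j).card + 1) ⊔
          JB (fun t => Ideal.Quotient.mk (Ideal.span {g j ^ τ}) (g t))
            ((S.erase j).image fun t => Pi.single t l) := by
        rw [AT, Ideal.map_sup, Ideal.map_pow, JB_map, Ideal.map_span]
        congr 3
        rw [← Set.image_comp]
        rfl
      rw [← hmapID] at hIH
      exact Ideal.mem_quotient_iff_mem_sup.mp hIH
    -- the invariant
    have hinv : ∀ r, t₁ + r ≤ t₂ → ∃ y v : A', x = y + v * g j ^ (t₁ + r) ∧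
        y ∈ (Ideal.span (g '' ↑S)) ^ (m - S.card + 1) ⊔
          JB g (S.image fun t => Pi.single t l) ∧
        y ∈ AT g (S.erase j) l m (t₁ + r) := by
      intro r
      induction r with
      | zero =>
        intro hr
        obtain ⟨y, hy, w, hw, hxy⟩ := Submodule.mem_sup.mp (claim t₁ le_rfl (by omega))
        obtain ⟨v, hv⟩ := Ideal.mem_span_singleton'.mp hw
        exact ⟨y, v, by rw [Nat.add_zero, ← hxy, ← hv], hA1G hy, hy⟩
      | succ r ih =>
        intro hr
        obtain ⟨y, v, hxe, hyG, hyA⟩ := ih (by omega)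
        obtain ⟨y₂, hy₂, w₂, hw₂, hxy₂⟩ := Submodule.mem_sup.mp
          (claim (t₁ + r + 1) (by omega) (by omega))
        obtain ⟨v₂, hv₂⟩ := Ideal.mem_span_singleton'.mp hw₂
        have hyA' : y ∈ AT g (S.erase j) l m (t₁ + r + 1) :=
          hAmono _ _ (by omega) hyA
        have hmem : v * g j ^ (t₁ + r) ∈ AT g (S.erase j) l m (t₁ + r + 1) ⊔
            Ideal.span {g j ^ (t₁ + r + 1)} := by
          have heq : v * g j ^ (t₁ + r) = (y₂ - y) + v₂ * g j ^ (t₁ + r + 1) := by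
            have := hxe
            rw [← hxy₂, ← hv₂] at this
            linear_combination -this
          rw [heq]
          exact Submodule.add_mem _
            (Submodule.mem_sup_left (Submodule.sub_mem _ hy₂ hyA'))
            (Submodule.mem_sup_right (Ideal.mul_mem_left _ _
              (Ideal.mem_span_singleton_self _)))
        obtain ⟨α, hα, wβ, hwβ, heq2⟩ := Submodule.mem_sup.mp hmem
        obtain ⟨β, hβ⟩ := Ideal.mem_span_singleton'.mp hwβ
        have h5 : (v - β * g j) * g j ^ (t₁ + r) = α := by
          have h6 : v * g j ^ (t₁ + r) = α + β * g j ^ (t₁ + r + 1) := by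
            rw [hβ, heq2]
          rw [pow_succ] at h6
          linear_combination h6
        have hva : v - β * g j ∈ AT g (S.erase j) l m (t₁ + r + 1) :=
          hcolpow _ (t₁ + r) _ (by rw [h5]; exact hα)
        refine ⟨y + (v - β * g j) * g j ^ (t₁ + r), β, ?_, ?_, ?_⟩
        · rw [hxe, show t₁ + (r + 1) = (t₁ + r) + 1 from rfl, pow_succ]; ring
        · exact Submodule.add_mem _ hyG (hAmulG (t₁ + r) _ (by omega) hva)
        · exact Submodule.add_mem _ hyA'
            (Ideal.mul_mem_right _ _ hva)
    -- finish
    obtain ⟨y, v, hxe, hyG, _⟩ := hinv (t₂ - t₁) (by omega)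
    have ht12e : t₁ + (t₂ - t₁) = t₂ := by omega
    rw [ht12e] at hxe
    rw [hxe]
    refine Submodule.add_mem _ hyG ?_
    by_cases hcase : l ≤ m - S.card + 1
    · have ht₂l : t₂ = l := by rw [ht₂def]; omega
      rw [ht₂l]
      refine Submodule.mem_sup_right (Ideal.mul_mem_left _ _ ?_)
      have : g j ^ l = mon g (Pi.single j l) := (mon_single g j l).symm
      rw [this]
      exact mon_mem_JB (Finset.mem_image.mpr ⟨j, hjS, rfl⟩)
    · have ht₂m : t₂ = m - S.card + 1 := by rw [ht₂def]; omega
      rw [ht₂m]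
      exact Submodule.mem_sup_left (Ideal.mul_mem_left _ _
        (Ideal.pow_mem_pow hgjS _))

lemma JB_image_single (g : Fin d → A) (S : Finset (Fin d)) (l : ℕ) :
    JB g (S.image fun t => Pi.single t l) = Ideal.span ((fun t => g t ^ l) '' ↑S) := by
  unfold JB
  congr 1
  rw [Finset.coe_image, Set.image_image]
  exact Set.image_congr fun t _ => mon_single g t l

end Stmt5Aux

open Stmt5Aux in
/-- Let `(R,m)` be Noetherian local, `I` an `m`-primary ideal generated by a regular
sequence `f₁, …, f_d` with `d ≥ 2`, and `I^{[l]} = (f₁^l, …, f_d^l)`.  Then for all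
`l, n ≥ 1`, `I^{[l]} : I^n = I^{dl-n-d+1} + I^{[l]}`, with the convention `I^k = R`
for `k ≤ 0` (expressed here using integer arithmetic and an `if`). -/
theorem stmt5 {R : Type*} [CommRing R] [IsNoetherianRing R] [IsLocalRing R]
    {d : ℕ} (hd : 2 ≤ d) (f : Fin d → R)
    (hreg : RingTheory.Sequence.IsRegular R (List.ofFn f))
    (hprim : (Ideal.span (Set.range f)).radical = IsLocalRing.maximalIdeal R)
    (l n : ℕ) (hl : 1 ≤ l) (hn : 1 ≤ n) :
    (Ideal.span (Set.range fun i => f i ^ l)).colon (((Ideal.span (Set.range f)) ^ n : Ideal R) : Set R) =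
      (if ((d : ℤ) * l - n - d + 1) ≤ 0 then (⊤ : Ideal R)
        else (Ideal.span (Set.range f)) ^ (((d : ℤ) * l - n - d + 1).toNat))
        ⊔ Ideal.span (Set.range fun i => f i ^ l) := by
  classical
  set I := Ideal.span (Set.range f) with hIdef
  set Il := Ideal.span (Set.range fun i => f i ^ l) with hIldef
  have hHP : HP f Finset.univ := HP_of_HWI (HWI_univ f hreg)
  have hIeq : I = Ideal.span (f '' ↑(Finset.univ : Finset (Fin d))) := by
    rw [hIdef, Finset.coe_univ, Set.image_univ]
  have hIleq : Il = JB f (Finset.univ.image fun t => Pi.single t l) := by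
    rw [hIldef, JB_image_single, Finset.coe_univ, Set.image_univ]
  have hdl : d * (l - 1) + d = d * l := by
    conv_rhs => rw [show l = (l - 1) + 1 by omega]
    rw [Nat.mul_succ]
  have hpig : I ^ (d * (l - 1) + 1) ≤ Il := by
    have h := pigeonhole f Finset.univ l
    rw [Finset.card_univ, Fintype.card_fin] at h
    rw [hIeq, hIleq]
    exact h
  have hcast : ((d * l : ℕ) : ℤ) = (d : ℤ) * l := by push_cast; ring
  by_cases hif : ((d : ℤ) * l - n - d + 1) ≤ 0
  · -- RHS is everything; the colon ideal is everything
    rw [if_pos hif, top_sup_eq]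
    have hnd : d * (l - 1) + 1 ≤ n := by omega
    have hInIl : I ^ n ≤ Il := le_trans (Ideal.pow_le_pow_right hnd) hpig
    rw [Submodule.eq_top_iff']
    intro x
    rw [Submodule.mem_colon]
    intro p hp
    exact Ideal.mul_mem_left _ _ (hInIl hp)
  · rw [if_neg hif]
    push_neg at hif
    obtain ⟨DL, hP⟩ : ∃ DL : ℕ, DL = d * l := ⟨_, rfl⟩
    have hPcast : (DL : ℤ) = (d : ℤ) * l := by rw [hP]; push_cast; ring
    rw [← hPcast] at hif
    have hPd : d * (l - 1) + d = DL := by rw [hP]; exact hdl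
    have hnle : n ≤ d * (l - 1) := by omega
    set m := DL - n with hmdef
    have hmd : d ≤ m := by omega
    have hml : m ≤ DL := by omega
    have htoNat : ((d : ℤ) * l - n - d + 1).toNat = m - d + 1 := by
      have hnDL : n ≤ DL := by omega
      have h1 : (d : ℤ) * l - n - d + 1 = ((m - d + 1 : ℕ) : ℤ) := by
        rw [← hPcast, Nat.cast_add, Nat.cast_sub hmd, Nat.cast_one, hmdef,
          Nat.cast_sub hnDL]
      rw [h1, Int.toNat_natCast]
    rw [htoNat]
    apply le_antisymm
    · -- hard direction
      intro x hx
      rw [Submodule.mem_colon] at hx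
      have hIn : ∀ k : ℕ, I ^ k = JB f (Dset Finset.univ k) := fun k => by
        rw [hIeq, span_pow_eq_JB]
      have hIlP : Il = P f (fun _ => l) := by
        rw [hIleq, P, pureB]
        have hsup : esupp (fun _ : Fin d => l) = Finset.univ := by
          ext t
          rw [mem_esupp]
          simp only [Finset.mem_univ, iff_true]
          omega
        rw [hsup]
      have hSM := SMAIN l hl Finset.univ.card f Finset.univ hHP le_rfl m ?_ ?_ x ?_
      · rw [Finset.card_univ, Fintype.card_fin] at hSM
        rw [← hIeq, ← hIleq] at hSM
        exact hSM
      · rw [Finset.card_univ, Fintype.card_fin]; exact hmd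
      · rw [Finset.card_univ, Fintype.card_fin, ← hP]; exact hml
      · intro c hc1 _ hcm
        have hbsum : ∑ t, (l - c t) = n := by
          have h1 : ∀ t : Fin d, (l - c t) + c t = l := fun t => by
            have := hc1 t (Finset.mem_univ t)
            omega
          have h2 : ∑ t, ((l - c t) + c t) = ∑ _t : Fin d, l := by
            exact Finset.sum_congr rfl (fun t _ => h1 t)
          rw [Finset.sum_add_distrib] at h2
          rw [Finset.sum_const, Finset.card_univ, Fintype.card_fin, smul_eq_mul,
            ← hP] at h2
          omega
        have hbI : mon f (fun t => l - c t) ∈ I ^ n := by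
          rw [hIn n]
          exact mon_mem_JB (mem_Dset.mpr ⟨fun t _ => Finset.mem_univ t, hbsum⟩)
        have hxb : x * mon f (fun t => l - c t) ∈ Il := by
          have := hx _ hbI
          rwa [smul_eq_mul] at this
        have hcol := colon_mon hHP n (fun t => l - c t) (fun _ => l) (le_of_eq hbsum)
          (fun t _ => Finset.mem_univ t)
          (fun t ht => by
            have h := hc1 t (Finset.mem_univ t)
            show l - c t < l
            omega) x (by rw [← hIlP]; exact hxb)
        have hcb : (fun _ => l) - (fun t => l - c t) = c := by
          funext t
          have := hc1 t (Finset.mem_univ t)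
          simp only [Pi.sub_apply]
          omega
        rwa [hcb] at hcol
    · -- easy direction
      apply sup_le
      · intro x hx
        rw [Submodule.mem_colon]
        intro p hp
        rw [smul_eq_mul]
        have hmul : x * p ∈ I ^ (m - d + 1) * I ^ n := Ideal.mul_mem_mul hx hp
        rw [← pow_add] at hmul
        have hexp : m - d + 1 + n = d * (l - 1) + 1 := by omega
        rw [hexp] at hmul
        exact hpig hmul
      · intro x hx
        rw [Submodule.mem_colon]
        intro p hp
        rw [smul_eq_mul]
        exact Ideal.mul_mem_right _ _ hx
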